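/- (Lebesgue-type differentiation theorem for fiber integrals.) Let f ∈ L¹(ℂⁿ) with ℂⁿ = ℂ^{n-k} × ℂᵏ, 1 ≤ k ≤ n. Then for almost every z'' ∈ ℂᵏ: the function w' ↦ f(w',z'') is integrable on ℂ^{n-k}, and lim_{ε→0} (1/λ_k(B(z'',ε))) ∫_{B(z'',ε)} ∫_{ℂ^{n-k}} |f(w',w'') − f(w',z'')| dλ_{n-k}(w') dλ_k(w'') = 0. -/

import Mathlib

open MeasureTheory Metric ENNReal Filter

section Aux

variable {X Y : Type*}
  [NormedAddCommGroup X] [NormedSpace ℝ X] [FiniteDimensional ℝ X]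
  [MeasurableSpace X] [BorelSpace X]
  [NormedAddCommGroup Y] [NormedSpace ℝ Y] [FiniteDimensional ℝ Y] [Nontrivial Y]
  [MeasurableSpace Y] [BorelSpace Y]
  (ν : Measure X) (μ : Measure Y) [ν.IsAddHaarMeasure] [μ.IsAddHaarMeasure]

/-- Auxiliary version of the theorem, for a strongly measurable function on a product of
finite-dimensional real normed spaces equipped with Haar measures. -/
theorem lebesgue_differentiation_fiber_aux
    (f : X × Y → ℂ) (hfm : StronglyMeasurable f) (hf : Integrable f (ν.prod μ)) :
    ∀ᵐ z ∂μ, Integrable (fun w' => f (w', z)) ν ∧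
      Tendsto (fun ε : ℝ =>
          (μ (ball z ε))⁻¹ *
            ∫⁻ w'' in ball z ε, ∫⁻ w', (‖f (w', w'') - f (w', z)‖₊ : ℝ≥0∞) ∂ν ∂μ)
        (nhdsWithin 0 (Set.Ioi 0)) (nhds 0) := by
  classical
  -- approximation by continuous compactly supported functions
  have hex : ∀ m : ℕ, ∃ φ : X × Y → ℂ, HasCompactSupport φ ∧
      (∫⁻ p, ‖f p - φ p‖₊ ∂(ν.prod μ)) ≤ 2⁻¹ ^ m ∧ Continuous φ ∧ Integrable φ (ν.prod μ) :=
    fun m => hf.exists_hasCompactSupport_lintegral_sub_le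
      (pow_ne_zero m (by norm_num : (2⁻¹ : ℝ≥0∞) ≠ 0))
  choose φ hφsupp hφle hφcont hφint using hex
  set d : ℕ → X × Y → ℂ := fun m p => f p - φ m p with hd
  have hdm : ∀ m, Measurable fun p => (‖d m p‖₊ : ℝ≥0∞) :=
    fun m => (hfm.measurable.sub (hφcont m).measurable).enorm
  set h : ℕ → Y → ℝ≥0∞ := fun m y => ∫⁻ x, (‖d m (x, y)‖₊ : ℝ≥0∞) ∂ν with hh
  have hhm : ∀ m, Measurable (h m) := fun m => (hdm m).lintegral_prod_left'
  set H : ℕ → Y → ℝ := fun m y => ∫ x, ‖d m (x, y)‖ ∂ν with hH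
  have hdint : ∀ m, Integrable (d m) (ν.prod μ) := fun m => hf.sub (hφint m)
  have hHint : ∀ m, Integrable (H m) μ := fun m => (hdint m).integral_norm_prod_right
  -- the errors `h m z` tend to zero for a.e. `z`
  have hsum : ∀ᵐ z ∂μ, Tendsto (fun m => h m z) atTop (nhds 0) := by
    have A : ∀ m, ∫⁻ z, h m z ∂μ ≤ 2⁻¹ ^ m := by
      intro m
      rw [hh]
      dsimp only
      rw [← lintegral_prod_symm _ (hdm m).aemeasurable]
      exact hφle m
    have B : ∫⁻ z, ∑' m, h m z ∂μ ≠ ⊤ := by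
      rw [lintegral_tsum (fun m => (hhm m).aemeasurable)]
      refine ne_top_of_le_ne_top ?_ (ENNReal.tsum_le_tsum A)
      rw [ENNReal.tsum_geometric, ENNReal.one_sub_inv_two]
      simp
    have C : ∀ᵐ z ∂μ, (∑' m, h m z) ≠ ⊤ :=
      (ae_lt_top (Measurable.ennreal_tsum hhm) B).mono (fun z hz => hz.ne)
    exact C.mono fun z hz => ENNReal.tendsto_atTop_zero_of_tsum_ne_top hz
  -- the continuity term
  have cont_bound : ∀ (m : ℕ) (z : Y) {η : ℝ≥0∞}, 0 < η →
      ∀ᶠ ε in nhdsWithin (0:ℝ) (Set.Ioi 0),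
        (μ (ball z ε))⁻¹ *
          ∫⁻ w'' in ball z ε, ∫⁻ w', (‖φ m (w', w'') - φ m (w', z)‖₊ : ℝ≥0∞) ∂ν ∂μ ≤ η := by
    intro m z η hη
    obtain ⟨c, hc0, hcη⟩ := exists_between hη
    have hcT : c ≠ ⊤ := (lt_of_lt_of_le hcη le_top).ne
    set K : Set X := Prod.fst '' tsupport (φ m) with hK
    have hKc : IsCompact K := (hφsupp m).image continuous_fst
    set A : ℝ≥0∞ := ν K + 1 with hA
    have hA0 : A ≠ 0 := by simp [hA]
    have hAT : A ≠ ⊤ := by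
      rw [hA]
      exact ENNReal.add_ne_top.2 ⟨hKc.measure_lt_top.ne, ENNReal.one_ne_top⟩
    have hcA : c / A ≠ ⊤ := (ENNReal.div_lt_top hcT hA0).ne
    have hcA0 : c / A ≠ 0 := by
      simp only [ne_eq, ENNReal.div_eq_zero_iff, not_or]
      exact ⟨hc0.ne', hAT⟩
    set r : ℝ := (c / A).toReal with hr
    have hrpos : 0 < r := ENNReal.toReal_pos hcA0 hcA
    have hφuc : UniformContinuous (φ m) :=
      (hφsupp m).uniformContinuous_of_continuous (hφcont m)
    obtain ⟨δ, hδ0, hδ⟩ := Metric.uniformContinuous_iff.1 hφuc r hrpos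
    filter_upwards [Ioo_mem_nhdsGT_of_mem (Set.mem_Ico.2 ⟨le_refl (0:ℝ), hδ0⟩)] with ε hε
    obtain ⟨hε0, hεδ⟩ := hε
    have hb0 : μ (ball z ε) ≠ 0 := (measure_ball_pos μ z hε0).ne'
    have hbT : μ (ball z ε) ≠ ⊤ := measure_ball_lt_top.ne
    have key : ∀ w'' ∈ ball z ε,
        (∫⁻ w', (‖φ m (w', w'') - φ m (w', z)‖₊ : ℝ≥0∞) ∂ν) ≤ c := by
      intro w'' hw''
      have hdist : dist w'' z < δ := lt_trans (mem_ball.1 hw'') hεδ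
      have hb : ∀ w', (‖φ m (w', w'') - φ m (w', z)‖₊ : ℝ≥0∞) ≤
          K.indicator (fun _ => ENNReal.ofReal r) w' := by
        intro w'
        by_cases hw' : w' ∈ K
        · rw [Set.indicator_of_mem hw', ← enorm_eq_nnnorm, ← ofReal_norm_eq_enorm]
          apply ENNReal.ofReal_le_ofReal
          have hdd : dist ((w', w'') : X × Y) (w', z) < δ := by
            rw [Prod.dist_eq]
            simp only [dist_self]
            rw [max_eq_right dist_nonneg]
            exact hdist
          have h3 := hδ hdd
          rw [dist_eq_norm] at h3
          exact h3.le
        · rw [Set.indicator_of_notMem hw']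
          have h1 : φ m (w', w'') = 0 := by
            by_contra hcon
            exact hw' ⟨(w', w''), subset_tsupport _ hcon, rfl⟩
          have h2 : φ m (w', z) = 0 := by
            by_contra hcon
            exact hw' ⟨(w', z), subset_tsupport _ hcon, rfl⟩
          simp [h1, h2]
      calc (∫⁻ w', (‖φ m (w', w'') - φ m (w', z)‖₊ : ℝ≥0∞) ∂ν)
          ≤ ∫⁻ w', K.indicator (fun _ => ENNReal.ofReal r) w' ∂ν := lintegral_mono hb
        _ = ENNReal.ofReal r * ν K := lintegral_indicator_const hKc.isClosed.measurableSet _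
        _ ≤ (c / A) * A := by
            refine mul_le_mul' ?_ ?_
            · rw [hr, ENNReal.ofReal_toReal hcA]
            · rw [hA]; exact le_self_add
        _ = c := ENNReal.div_mul_cancel hA0 hAT
    calc (μ (ball z ε))⁻¹ *
          ∫⁻ w'' in ball z ε, ∫⁻ w', (‖φ m (w', w'') - φ m (w', z)‖₊ : ℝ≥0∞) ∂ν ∂μ
        ≤ (μ (ball z ε))⁻¹ * ∫⁻ _w'' in ball z ε, c ∂μ :=
          mul_le_mul_right (setLIntegral_mono measurable_const key) _
      _ = (μ (ball z ε))⁻¹ * (c * μ (ball z ε)) := by rw [setLIntegral_const]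
      _ = c * ((μ (ball z ε))⁻¹ * μ (ball z ε)) := by ring
      _ = c := by rw [ENNReal.inv_mul_cancel hb0 hbT, mul_one]
      _ ≤ η := hcη.le
  -- the differentiation term
  have diff_m : ∀ m : ℕ, ∀ᵐ z ∂μ,
      Tendsto (fun ε : ℝ => ⨍ y in closedBall z ε, H m y ∂μ)
        (nhdsWithin 0 (Set.Ioi 0)) (nhds (H m z)) := by
    intro m
    filter_upwards [IsUnifLocDoublingMeasure.ae_tendsto_average (μ := μ)
      ((hHint m).locallyIntegrable) 1] with z hz
    refine hz (fun _ => z) id tendsto_id ?_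
    filter_upwards [self_mem_nhdsWithin] with ε hε
    exact mem_closedBall_self (by simpa using (le_of_lt hε))
  -- assembly
  filter_upwards [hf.prod_left_ae, ae_all_iff.2 (fun m => (hdint m).prod_left_ae),
    ae_all_iff.2 diff_m, hsum] with z hfz hdz hdiff hzsum
  refine ⟨hfz, ?_⟩
  have hmz_eq : ∀ m, h m z = ENNReal.ofReal (H m z) :=
    fun m => (ofReal_integral_norm_eq_lintegral_enorm (hdz m)).symm
  have hmz_ne : ∀ m, h m z ≠ ⊤ := fun m => by
    rw [hmz_eq m]; exact ENNReal.ofReal_ne_top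
  rw [ENNReal.tendsto_nhds_zero]
  intro η hη
  have hη8 : (0:ℝ≥0∞) < η / 8 := ENNReal.div_pos hη.ne' (by norm_num)
  obtain ⟨m, hm⟩ : ∃ m, h m z < η / 8 := (hzsum.eventually_lt_const hη8).exists
  -- the differentiated term tends to `h m z`
  have hT1 : Tendsto (fun ε : ℝ => (μ (ball z ε))⁻¹ * ∫⁻ w'' in ball z ε, h m w'' ∂μ)
      (nhdsWithin 0 (Set.Ioi 0)) (nhds (h m z)) := by
    have conv : ∀ᶠ ε in nhdsWithin (0:ℝ) (Set.Ioi 0),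
        (μ (ball z ε))⁻¹ * ∫⁻ w'' in ball z ε, h m w'' ∂μ =
          ENNReal.ofReal (⨍ y in closedBall z ε, H m y ∂μ) := by
      filter_upwards [self_mem_nhdsWithin] with ε hε0
      have hball_ae : ball z ε =ᵐ[μ] closedBall z ε := by
        rw [MeasureTheory.ae_eq_set]
        constructor
        · rw [Set.diff_eq_empty.2 ball_subset_closedBall]; exact measure_empty
        · rw [closedBall_diff_ball]; exact Measure.addHaar_sphere μ z ε
      have hrw : μ.restrict (ball z ε) = μ.restrict (closedBall z ε) :=
        Measure.restrict_congr_set hball_ae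
      rw [measure_congr hball_ae, hrw]
      have hcB0 : μ (closedBall z ε) ≠ 0 := by
        rw [← measure_congr hball_ae]
        exact (measure_ball_pos μ z hε0).ne'
      have hcBT : μ (closedBall z ε) ≠ ⊤ := measure_closedBall_lt_top.ne
      have e1 : ∫⁻ w'' in closedBall z ε, h m w'' ∂μ =
          ENNReal.ofReal (∫ y in closedBall z ε, H m y ∂μ) := by
        rw [ofReal_integral_eq_lintegral_ofReal ((hHint m).integrableOn)
          (ae_restrict_of_ae (Eventually.of_forall
            (fun y => integral_nonneg (fun x => norm_nonneg _))))]
        apply lintegral_congr_ae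
        apply ae_restrict_of_ae
        filter_upwards [(hdint m).prod_left_ae] with y hy
        exact (ofReal_integral_norm_eq_lintegral_enorm hy).symm
      rw [e1, setAverage_eq, smul_eq_mul, measureReal_def,
        ENNReal.ofReal_mul (inv_nonneg.2 ENNReal.toReal_nonneg),
        ENNReal.ofReal_inv_of_pos (ENNReal.toReal_pos hcB0 hcBT),
        ENNReal.ofReal_toReal hcBT]
    have base := ENNReal.tendsto_ofReal (hdiff m)
    rw [← hmz_eq m] at base
    exact Tendsto.congr' (EventuallyEq.symm conv) base
  have E1 : ∀ᶠ ε in nhdsWithin (0:ℝ) (Set.Ioi 0),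
      (μ (ball z ε))⁻¹ * ∫⁻ w'' in ball z ε, h m w'' ∂μ < h m z + η / 8 :=
    hT1.eventually_lt_const (ENNReal.lt_add_right (hmz_ne m) hη8.ne')
  have E2 := cont_bound m z hη8
  filter_upwards [E1, E2, self_mem_nhdsWithin] with ε h1 h2 hε0
  have hb0 : μ (ball z ε) ≠ 0 := (measure_ball_pos μ z hε0).ne'
  have hbT : μ (ball z ε) ≠ ⊤ := measure_ball_lt_top.ne
  have hcmeas : Measurable (fun w'' : Y =>
      ∫⁻ w', (‖φ m (w', w'') - φ m (w', z)‖₊ : ℝ≥0∞) ∂ν) := by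
    exact Measurable.lintegral_prod_left'
      (f := fun p : X × Y => (‖φ m p - φ m (p.1, z)‖₊ : ℝ≥0∞))
      ((hφcont m).sub ((hφcont m).comp
        (continuous_fst.prodMk continuous_const))).measurable.enorm
  have tri : ∀ w'', (∫⁻ w', (‖f (w', w'') - f (w', z)‖₊ : ℝ≥0∞) ∂ν)
      ≤ h m w'' + ((∫⁻ w', (‖φ m (w', w'') - φ m (w', z)‖₊ : ℝ≥0∞) ∂ν) + h m z) := by
    intro w''
    have ptw : ∀ w', (‖f (w', w'') - f (w', z)‖₊ : ℝ≥0∞) ≤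
        (‖d m (w', w'')‖₊ : ℝ≥0∞) +
          ((‖φ m (w', w'') - φ m (w', z)‖₊ : ℝ≥0∞) + (‖d m (w', z)‖₊ : ℝ≥0∞)) := by
      intro w'
      simp only [hd]
      simp only [← enorm_eq_nnnorm, ← edist_eq_enorm_sub]
      rw [edist_comm (f (w', z)) (φ m (w', z))]
      calc edist (f (w', w'')) (f (w', z))
          ≤ edist (f (w', w'')) (φ m (w', w'')) + edist (φ m (w', w'')) (φ m (w', z)) +
            edist (φ m (w', z)) (f (w', z)) := edist_triangle4 _ _ _ _
        _ = edist (f (w', w'')) (φ m (w', w'')) + (edist (φ m (w', w'')) (φ m (w', z)) +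
            edist (φ m (w', z)) (f (w', z))) := by rw [add_assoc]
    calc (∫⁻ w', (‖f (w', w'') - f (w', z)‖₊ : ℝ≥0∞) ∂ν)
        ≤ ∫⁻ w', ((‖d m (w', w'')‖₊ : ℝ≥0∞) +
            ((‖φ m (w', w'') - φ m (w', z)‖₊ : ℝ≥0∞) + (‖d m (w', z)‖₊ : ℝ≥0∞))) ∂ν :=
          lintegral_mono ptw
      _ = h m w'' + ((∫⁻ w', (‖φ m (w', w'') - φ m (w', z)‖₊ : ℝ≥0∞) ∂ν) + h m z) := by
          have hu : Measurable fun w' : X => (‖d m (w', w'')‖₊ : ℝ≥0∞) :=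
            (hdm m).comp (measurable_id.prodMk measurable_const)
          have hv : Measurable fun w' : X => (‖φ m (w', w'') - φ m (w', z)‖₊ : ℝ≥0∞) :=
            (((hφcont m).comp (continuous_id.prodMk continuous_const)).sub
              ((hφcont m).comp (continuous_id.prodMk continuous_const))).measurable.enorm
          rw [lintegral_add_left hu, lintegral_add_left hv]
  calc (μ (ball z ε))⁻¹ *
        ∫⁻ w'' in ball z ε, ∫⁻ w', (‖f (w', w'') - f (w', z)‖₊ : ℝ≥0∞) ∂ν ∂μ
      ≤ (μ (ball z ε))⁻¹ * ∫⁻ w'' in ball z ε,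
          (h m w'' + ((∫⁻ w', (‖φ m (w', w'') - φ m (w', z)‖₊ : ℝ≥0∞) ∂ν) + h m z)) ∂μ :=
        mul_le_mul_right (lintegral_mono tri) _
    _ = (μ (ball z ε))⁻¹ * ((∫⁻ w'' in ball z ε, h m w'' ∂μ) +
          ((∫⁻ w'' in ball z ε, ∫⁻ w', (‖φ m (w', w'') - φ m (w', z)‖₊ : ℝ≥0∞) ∂ν ∂μ) +
            h m z * μ (ball z ε))) := by
        rw [lintegral_add_left (hhm m), lintegral_add_left hcmeas, setLIntegral_const]
    _ = ((μ (ball z ε))⁻¹ * ∫⁻ w'' in ball z ε, h m w'' ∂μ) +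
          (((μ (ball z ε))⁻¹ *
            ∫⁻ w'' in ball z ε, ∫⁻ w', (‖φ m (w', w'') - φ m (w', z)‖₊ : ℝ≥0∞) ∂ν ∂μ) +
            h m z) := by
        rw [mul_add, mul_add, mul_comm (h m z) (μ (ball z ε)), ← mul_assoc,
          ENNReal.inv_mul_cancel hb0 hbT, one_mul]
    _ ≤ (h m z + η / 8) + (η / 8 + h m z) := add_le_add h1.le (add_le_add h2 le_rfl)
    _ ≤ (η / 8 + η / 8) + (η / 8 + η / 8) := by gcongr
    _ = 4 * (η / 8) := by ring
    _ ≤ 8 * (η / 8) := by gcongr <;> norm_num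
    _ = η := ENNReal.mul_div_cancel' (by norm_num) (by norm_num)

end Aux

/-- **Lebesgue-type differentiation theorem for fiber integrals.** For `f ∈ L¹(ℂⁿ)`,
`ℂⁿ = ℂ^{n-k} × ℂᵏ` (identifying `ℂᵐ ≅ ℝ^{2m}`), for almost every `z''` the fiber
`w' ↦ f(w',z'')` is integrable and
`lim_{ε→0} (1/λ_k(B(z'',ε))) ∫_{B(z'',ε)} ∫_{ℂ^{n-k}} |f(w',w'') − f(w',z'')| = 0`. -/
theorem lebesgue_differentiation_fiber (n k : ℕ) (hk : 1 ≤ k) (hkn : k ≤ n)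
    (f : EuclideanSpace ℝ (Fin (2 * (n - k))) × EuclideanSpace ℝ (Fin (2 * k)) → ℂ)
    (hf : Integrable f volume) :
    ∀ᵐ z'' : EuclideanSpace ℝ (Fin (2 * k)) ∂volume,
      Integrable (fun w' => f (w', z'')) volume ∧
      Tendsto (fun ε : ℝ =>
          (volume (ball z'' ε))⁻¹ *
            ∫⁻ w'' in ball z'' ε,
              ∫⁻ w', (‖f (w', w'') - f (w', z'')‖₊ : ℝ≥0∞) ∂volume ∂volume)
        (nhdsWithin 0 (Set.Ioi 0)) (nhds 0) := by
  classical
  haveI : Nontrivial (EuclideanSpace ℝ (Fin (2 * k))) := by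
    apply Module.nontrivial_of_finrank_pos (R := ℝ)
    rw [finrank_euclideanSpace, Fintype.card_fin]
    omega
  set ν := (volume : Measure (EuclideanSpace ℝ (Fin (2 * (n - k))))) with hν
  set μ := (volume : Measure (EuclideanSpace ℝ (Fin (2 * k)))) with hμ
  have hprod : (volume : Measure (EuclideanSpace ℝ (Fin (2 * (n - k))) ×
      EuclideanSpace ℝ (Fin (2 * k)))) = ν.prod μ := rfl
  rw [hprod] at hf
  -- replace `f` by a strongly measurable representative
  set g : EuclideanSpace ℝ (Fin (2 * (n - k))) × EuclideanSpace ℝ (Fin (2 * k)) → ℂ :=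
    hf.1.mk f with hg
  have hgm : StronglyMeasurable g := hf.1.stronglyMeasurable_mk
  have hfg : f =ᵐ[ν.prod μ] g := hf.1.ae_eq_mk
  have hg_int : Integrable g (ν.prod μ) := hf.congr hfg
  -- a.e. section `z`, the fibers of `f` and `g` agree a.e.
  have hfg_fiber : ∀ᵐ z ∂μ, (fun w' => f (w', z)) =ᵐ[ν] fun w' => g (w', z) := by
    have swap_ae : ∀ᵐ p ∂(μ.prod ν), f p.swap = g p.swap :=
      (Measure.measurePreserving_swap (μ := μ) (ν := ν)).quasiMeasurePreserving.ae hfg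
    exact Measure.ae_ae_of_ae_prod swap_ae
  filter_upwards [hfg_fiber,
    lebesgue_differentiation_fiber_aux ν μ g hgm hg_int] with z hz hzg
  constructor
  · exact hzg.1.congr hz.symm
  · refine Tendsto.congr (fun ε => ?_) hzg.2
    congr 1
    apply lintegral_congr_ae
    apply ae_restrict_of_ae
    filter_upwards [hfg_fiber] with w'' hw''
    apply lintegral_congr_ae
    filter_upwards [hw'', hz] with w' h1 h2
    rw [h1, h2]
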